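/- Let R be a ℤ-graded ring with non-negative part P, let A be a k×k matrix over R, let m ∈ ℤ be suitable for A, and let n > m (so n is also suitable for A). Then there is an isomorphism of R_0-modules coker μ(A,n) ≅ coker μ(A,m) ⊕ B^k, where B := {x ∈ R : the homogeneous components of x vanish in all degrees outside {−n, −n+1, …, −m−1}} (i.e. B = ⨁_{j=−n}^{−m−1} R_j), regarded as an R_0-submodule of R, and the cokernels are regarded as R_0-modules by restriction of scalars along R_0 ⊆ P. -/
import Mathlib

open DirectSum CategoryTheory
universe u
section GradedPreamble

/-- A partition of unity of type `(n, -n)` in the `ℤ`-graded ring `R`: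
a finite family `α₁, …, α_N ∈ R_n`, `β₁, …, β_N ∈ R_{-n}` with `∑ j, α j * β j = 1`. -/
def HasPartitionOfUnity {R : Type u} [Ring R] (𝒜 : ℤ → AddSubgroup R) (n : ℤ) : Prop :=
  ∃ (N : ℕ) (α β : Fin N → R),
    (∀ j, α j ∈ 𝒜 n) ∧ (∀ j, β j ∈ 𝒜 (-n)) ∧ ∑ j, α j * β j = 1
open DirectSum CategoryTheory

variable {R : Type u} [Ring R] (𝒜 : ℤ → AddSubgroup R) [GradedRing 𝒜]

noncomputable def comp' (i : ℤ) : R →+ R :=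
  ((𝒜 i).subtype).comp ((DFinsupp.evalAddMonoidHom i).comp
    (DirectSum.decomposeAddEquiv 𝒜).toAddMonoidHom)

lemma comp'_apply (i : ℤ) (x : R) : comp' 𝒜 i x = (DirectSum.decompose 𝒜 x i : R) := rfl

theorem decompose_mul_vanish {a b : R} {c d : ℤ}
    (ha : ∀ i : ℤ, i < c → (DirectSum.decompose 𝒜 a i : R) = 0)
    (hb : ∀ i : ℤ, i < d → (DirectSum.decompose 𝒜 b i : R) = 0) :
    ∀ i : ℤ, i < c + d → (DirectSum.decompose 𝒜 (a * b) i : R) = 0 := by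
  classical
  intro i hi
  have hae := (DirectSum.sum_support_decompose 𝒜 a).symm
  have hbe := (DirectSum.sum_support_decompose 𝒜 b).symm
  rw [← comp'_apply]
  conv_lhs => rw [hae, hbe]
  rw [Finset.sum_mul_sum]
  rw [map_sum]
  refine Finset.sum_eq_zero ?_
  intro j hj
  rw [map_sum]
  refine Finset.sum_eq_zero ?_
  intro k hk
  rw [comp'_apply]
  have hjc : c ≤ j := by
    by_contra h
    push_neg at h
    exact (DFinsupp.mem_support_iff.mp hj) (Subtype.ext (ha j h))
  have hkd : d ≤ k := by
    by_contra h
    push_neg at h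
    exact (DFinsupp.mem_support_iff.mp hk) (Subtype.ext (hb k h))
  have hmem : ((DirectSum.decompose 𝒜 a j : R) * (DirectSum.decompose 𝒜 b k : R)) ∈ 𝒜 (j + k) :=
    SetLike.mul_mem_graded (SetLike.coe_mem _) (SetLike.coe_mem _)
  exact DirectSum.decompose_of_mem_ne 𝒜 hmem (by omega)

/-- The degree-zero subring `R₀ = R_0` of the `ℤ`-graded ring `R`. -/
def gradeZeroSubring : Subring R where
  carrier := 𝒜 0
  zero_mem' := zero_mem _
  one_mem' := SetLike.one_mem_graded 𝒜
  add_mem' := fun ha hb => add_mem ha hb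
  neg_mem' := fun ha => neg_mem ha
  mul_mem' := fun ha hb => by simpa using SetLike.mul_mem_graded ha hb

/-- The non-negative part `P = ⨁_{k ≥ 0} R_k` of the `ℤ`-graded ring `R`:
the subring of elements whose homogeneous components in all negative degrees vanish. -/
def nonnegSubring : Subring R where
  carrier := {x | ∀ i : ℤ, i < 0 → (DirectSum.decompose 𝒜 x i : R) = 0}
  zero_mem' := by intro i hi; simp
  one_mem' := by
    intro i hi
    exact DirectSum.decompose_of_mem_ne 𝒜 (SetLike.one_mem_graded 𝒜) (by omega)
  add_mem' := by intro a b ha hb i hi; rw [DirectSum.decompose_add]; simp [ha i hi, hb i hi]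
  neg_mem' := by
    intro a ha i hi
    rw [DirectSum.decompose_neg, DFinsupp.neg_apply]
    push_cast [ha i hi]
    simp
  mul_mem' := by
    intro a b ha hb i hi
    exact decompose_mul_vanish 𝒜 ha hb i (by omega)

/-- `T_m = ⨁_{k ≥ -m} R_k`, the left `R₀`-submodule of `R` of all elements whose
homogeneous components in degrees `< -m` vanish. -/
def trunc (m : ℤ) : Submodule ↥(gradeZeroSubring 𝒜) R where
  carrier := {x | ∀ i : ℤ, i < -m → (DirectSum.decompose 𝒜 x i : R) = 0}
  zero_mem' := by intro i hi; simp
  add_mem' := by intro a b ha hb i hi; rw [DirectSum.decompose_add]; simp [ha i hi, hb i hi]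
  smul_mem' := by
    intro c x hx i hi
    have hc : ∀ i : ℤ, i < 0 → (DirectSum.decompose 𝒜 (c : R) i : R) = 0 := by
      intro i hi
      exact DirectSum.decompose_of_mem_ne 𝒜 c.2 (by omega)
    have : (c • x : R) = (c : R) * x := rfl
    rw [this]
    exact decompose_mul_vanish 𝒜 hc hx i (by omega)

lemma mem_trunc {m : ℤ} {x : R} :
    x ∈ trunc 𝒜 m ↔ ∀ i : ℤ, i < -m → (DirectSum.decompose 𝒜 x i : R) = 0 := Iff.rfl

/-- The left multiplication map `μ(A, m) : P^k → (T_m)^k`, `v ↦ v·A`, associated with a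
`k × k` matrix `A` over `R` all of whose entries have vanishing homogeneous components
in degrees `< -m`. -/
noncomputable def muMap (k : ℕ) (A : Matrix (Fin k) (Fin k) R) (m : ℤ)
    (hA : ∀ i j, A i j ∈ trunc 𝒜 m) :
    (Fin k → ↥(trunc 𝒜 0)) →ₗ[↥(gradeZeroSubring 𝒜)] (Fin k → ↥(trunc 𝒜 m)) where
  toFun v := fun j => ⟨∑ i, (v i : R) * A i j, by
    refine sum_mem ?_
    intro i _
    intro d hd
    exact decompose_mul_vanish 𝒜 (c := 0) (d := -m) (fun e he => (v i).2 e (by omega)) (hA i j) d (by omega)⟩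
  map_add' v w := by
    funext j
    apply Subtype.ext
    simp [add_mul, Finset.sum_add_distrib]
  map_smul' c v := by
    funext j
    apply Subtype.ext
    simp only [RingHom.id_apply, Pi.smul_apply]
    have hs : ∀ r : R, c • r = (c : R) * r := fun r => rfl
    simp [hs, Finset.mul_sum, mul_assoc]
end GradedPreamble

section GradedPreamble2
variable {R : Type u} [Ring R] (𝒜 : ℤ → AddSubgroup R) [GradedRing 𝒜]

theorem decompose_mul_vanish_above {a b : R} {c d : ℤ}
    (ha : ∀ i : ℤ, c < i → (DirectSum.decompose 𝒜 a i : R) = 0)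
    (hb : ∀ i : ℤ, d < i → (DirectSum.decompose 𝒜 b i : R) = 0) :
    ∀ i : ℤ, c + d < i → (DirectSum.decompose 𝒜 (a * b) i : R) = 0 := by
  classical
  intro i hi
  have hae := (DirectSum.sum_support_decompose 𝒜 a).symm
  have hbe := (DirectSum.sum_support_decompose 𝒜 b).symm
  rw [← comp'_apply]
  conv_lhs => rw [hae, hbe]
  rw [Finset.sum_mul_sum]
  rw [map_sum]
  refine Finset.sum_eq_zero ?_
  intro j hj
  rw [map_sum]
  refine Finset.sum_eq_zero ?_
  intro k hk
  rw [comp'_apply]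
  have hjc : j ≤ c := by
    by_contra h
    push_neg at h
    exact (DFinsupp.mem_support_iff.mp hj) (Subtype.ext (ha j h))
  have hkd : k ≤ d := by
    by_contra h
    push_neg at h
    exact (DFinsupp.mem_support_iff.mp hk) (Subtype.ext (hb k h))
  have hmem : ((DirectSum.decompose 𝒜 a j : R) * (DirectSum.decompose 𝒜 b k : R)) ∈ 𝒜 (j + k) :=
    SetLike.mul_mem_graded (SetLike.coe_mem _) (SetLike.coe_mem _)
  exact DirectSum.decompose_of_mem_ne 𝒜 hmem (by omega)

/-- `B = ⨁_{j = -n}^{-m-1} R_j`: the `R₀`-submodule of `R` of elements whose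
homogeneous components vanish in all degrees outside `{-n, …, -m-1}`. -/
def degreeWindow (n m : ℤ) : Submodule ↥(gradeZeroSubring 𝒜) R where
  carrier := {x | ∀ i : ℤ, (i < -n ∨ -m - 1 < i) → (DirectSum.decompose 𝒜 x i : R) = 0}
  zero_mem' := by intro i _; simp
  add_mem' := by intro a b ha hb i hi; rw [DirectSum.decompose_add]; simp [ha i hi, hb i hi]
  smul_mem' := by
    intro c x hx i hi
    have hs : (c • x : R) = (c : R) * x := rfl
    have hc0 : ∀ i : ℤ, i < 0 → (DirectSum.decompose 𝒜 (c : R) i : R) = 0 := fun i hi =>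
      DirectSum.decompose_of_mem_ne 𝒜 c.2 (by omega)
    have hc0' : ∀ i : ℤ, 0 < i → (DirectSum.decompose 𝒜 (c : R) i : R) = 0 := fun i hi =>
      DirectSum.decompose_of_mem_ne 𝒜 c.2 (by omega)
    rw [hs]
    rcases hi with hi | hi
    · exact decompose_mul_vanish 𝒜 (c := 0) (d := -n) hc0
        (fun e he => hx e (Or.inl he)) i (by omega)
    · exact decompose_mul_vanish_above 𝒜 (c := 0) (d := -m - 1) hc0'
        (fun e he => hx e (Or.inr he)) i (by omega)

end GradedPreamble2

section AuxProof
variable {R : Type u} [Ring R] (𝒜 : ℤ → AddSubgroup R) [GradedRing 𝒜]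

lemma decompose_zero_mul (c : ↥(gradeZeroSubring 𝒜)) (x : R) (i : ℤ) :
    (DirectSum.decompose 𝒜 ((c : R) * x) i : R) = (c : R) * (DirectSum.decompose 𝒜 x i : R) := by
  have := DirectSum.coe_decompose_mul_add_of_left_mem 𝒜 (i := 0) (j := i) (b := x) c.2
  rwa [zero_add] at this

lemma decompose_sum' {ι' : Type*} (s : Finset ι') (f : ι' → R) (j : ℤ) :
    (DirectSum.decompose 𝒜 (∑ i ∈ s, f i) j : R)
      = ∑ i ∈ s, (DirectSum.decompose 𝒜 (f i) j : R) := by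
  rw [← comp'_apply, map_sum]
  simp [comp'_apply]

lemma decompose_decompose (x : R) (i j : ℤ) :
    (DirectSum.decompose 𝒜 ((DirectSum.decompose 𝒜 x i : R)) j : R)
      = if i = j then (DirectSum.decompose 𝒜 x i : R) else 0 := by
  split_ifs with h
  · subst h; exact DirectSum.decompose_of_mem_same 𝒜 (SetLike.coe_mem _)
  · exact DirectSum.decompose_of_mem_ne 𝒜 (SetLike.coe_mem _) h

/-- The window part of `x`: sum of homogeneous components in degrees `-n, …, -m-1`. -/
noncomputable def wpart (n m : ℤ) (x : R) : R :=
  ∑ i ∈ Finset.Icc (-n) (-m - 1), (DirectSum.decompose 𝒜 x i : R)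

lemma decompose_wpart (n m : ℤ) (x : R) (j : ℤ) :
    (DirectSum.decompose 𝒜 (wpart 𝒜 n m x) j : R)
      = if j ∈ Finset.Icc (-n) (-m - 1) then (DirectSum.decompose 𝒜 x j : R) else 0 := by
  classical
  rw [wpart, decompose_sum']
  rw [Finset.sum_congr rfl (fun i _ => decompose_decompose 𝒜 x i j)]
  rw [Finset.sum_ite_eq']

lemma wpart_add (n m : ℤ) (x y : R) :
    wpart 𝒜 n m (x + y) = wpart 𝒜 n m x + wpart 𝒜 n m y := by
  simp [wpart, DirectSum.decompose_add, Finset.sum_add_distrib]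

lemma wpart_zero_mul (n m : ℤ) (c : ↥(gradeZeroSubring 𝒜)) (x : R) :
    wpart 𝒜 n m ((c : R) * x) = (c : R) * wpart 𝒜 n m x := by
  rw [wpart, wpart, Finset.mul_sum]
  exact Finset.sum_congr rfl fun i _ => decompose_zero_mul 𝒜 c x i

lemma wpart_mem_degreeWindow (n m : ℤ) (x : R) :
    wpart 𝒜 n m x ∈ degreeWindow 𝒜 n m := by
  intro j hj
  rw [decompose_wpart, if_neg]
  simp only [Finset.mem_Icc]
  omega

lemma sub_wpart_mem_trunc (n m : ℤ) (x : R) (hx : x ∈ trunc 𝒜 n) :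
    x - wpart 𝒜 n m x ∈ trunc 𝒜 m := by
  intro j hj
  rw [DirectSum.decompose_sub, DirectSum.sub_apply, AddSubgroupClass.coe_sub, decompose_wpart]
  by_cases h : j ∈ Finset.Icc (-n) (-m - 1)
  · rw [if_pos h, sub_self]
  · rw [if_neg h]
    simp only [Finset.mem_Icc, not_and_or, not_le] at h
    rcases h with h | h
    · rw [hx j (by omega), sub_zero]
    · omega

lemma wpart_eq_zero_of_mem_trunc (n m : ℤ) (x : R) (hx : x ∈ trunc 𝒜 m) :
    wpart 𝒜 n m x = 0 := by
  refine Finset.sum_eq_zero ?_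
  intro i hi
  simp only [Finset.mem_Icc] at hi
  exact hx i (by omega)

lemma wpart_eq_self_of_mem_window (n m : ℤ) (x : R) (hx : x ∈ degreeWindow 𝒜 n m) :
    wpart 𝒜 n m x = x := by
  classical
  have hsub : (DirectSum.decompose 𝒜 x).support ⊆ Finset.Icc (-n) (-m - 1) := by
    intro i hi
    rw [DFinsupp.mem_support_iff] at hi
    simp only [Finset.mem_Icc]
    by_contra h
    exact hi (Subtype.ext (hx i (by omega)))
  rw [wpart, ← Finset.sum_subset hsub (fun i _ hi => by
    rw [DFinsupp.notMem_support_iff] at hi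
    rw [hi]; rfl)]
  exact DirectSum.sum_support_decompose 𝒜 x

set_option synthInstance.maxHeartbeats 1000000 in
/-- The splitting map `T_n^k → coker μ(A,m) × B^k`. -/
noncomputable def splitMap (k : ℕ) (A : Matrix (Fin k) (Fin k) R) (m n : ℤ) (hmn : m < n)
    (hA : ∀ i j, A i j ∈ trunc 𝒜 m) :
    (Fin k → ↥(trunc 𝒜 n)) →ₗ[↥(gradeZeroSubring 𝒜)]
      (((Fin k → ↥(trunc 𝒜 m)) ⧸ LinearMap.range (muMap 𝒜 k A m hA)) ×
        (Fin k → ↥(degreeWindow 𝒜 n m))) where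
  toFun x :=
    (Submodule.Quotient.mk
        (fun j => (⟨(x j : R) - wpart 𝒜 n m (x j),
          sub_wpart_mem_trunc 𝒜 n m _ ((x j).2)⟩ : ↥(trunc 𝒜 m))),
      fun j => ⟨wpart 𝒜 n m (x j), wpart_mem_degreeWindow 𝒜 n m _⟩)
  map_add' x y := by
    refine Prod.ext ?_ ?_
    · show Submodule.Quotient.mk _ = Submodule.Quotient.mk _ + Submodule.Quotient.mk _
      rw [← Submodule.Quotient.mk_add]
      congr 1
      funext j
      apply Subtype.ext
      show ((x j : R) + (y j : R)) - wpart 𝒜 n m ((x j : R) + (y j : R))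
        = ((x j : R) - wpart 𝒜 n m (x j)) + ((y j : R) - wpart 𝒜 n m (y j))
      rw [wpart_add]
      abel
    · funext j
      apply Subtype.ext
      show wpart 𝒜 n m ((x j : R) + (y j : R)) = _
      rw [wpart_add]
      rfl
  map_smul' c x := by
    have hs : ∀ (y : ↥(trunc 𝒜 n)), ((c • y : ↥(trunc 𝒜 n)) : R) = (c : R) * (y : R) :=
      fun y => rfl
    refine Prod.ext ?_ ?_
    · show Submodule.Quotient.mk _ = c • Submodule.Quotient.mk _
      rw [← Submodule.Quotient.mk_smul]
      congr 1
      funext j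
      apply Subtype.ext
      show (((c • x) j : ↥(trunc 𝒜 n)) : R) - wpart 𝒜 n m (((c • x) j : ↥(trunc 𝒜 n)) : R)
        = (c : R) * ((x j : R) - wpart 𝒜 n m (x j))
      have h1 : (((c • x) j : ↥(trunc 𝒜 n)) : R) = (c : R) * (x j : R) := rfl
      rw [h1, wpart_zero_mul, mul_sub]
    · funext j
      apply Subtype.ext
      show wpart 𝒜 n m (((c • x) j : ↥(trunc 𝒜 n)) : R) = (c : R) * wpart 𝒜 n m (x j)
      have h1 : (((c • x) j : ↥(trunc 𝒜 n)) : R) = (c : R) * (x j : R) := rfl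
      rw [h1, wpart_zero_mul]

end AuxProof

/-- **Lemma.**  Let `R` be a `ℤ`-graded ring, `A` a `k × k` matrix over `R`, `m`
suitable for `A`, and `n > m`.  Then there is an isomorphism of `R₀`-modules
`coker μ(A,n) ≅ coker μ(A,m) ⊕ B^k`, where `B = ⨁_{j=-n}^{-m-1} R_j`. -/
theorem coker_muMap_succ {R : Type u} [Ring R]
    (𝒜 : ℤ → AddSubgroup R) [GradedRing 𝒜]
    (k : ℕ) (A : Matrix (Fin k) (Fin k) R) (m n : ℤ) (hmn : m < n)
    (hA : ∀ i j, A i j ∈ trunc 𝒜 m) :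
    Nonempty
      ((((Fin k → ↥(trunc 𝒜 n)) ⧸
          LinearMap.range (muMap 𝒜 k A n
            (fun i j e he => hA i j e (by omega)))) ≃ₗ[↥(gradeZeroSubring 𝒜)]
        ((Fin k → ↥(trunc 𝒜 m)) ⧸ LinearMap.range (muMap 𝒜 k A m hA)) ×
          (Fin k → ↥(degreeWindow 𝒜 n m)))) := by
  classical
  set hAn : ∀ i j, A i j ∈ trunc 𝒜 n := fun i j e he => hA i j e (by omega) with hAn_def
  set f := splitMap 𝒜 k A m n hmn hA with hf
  have hcol : ∀ (v : Fin k → ↥(trunc 𝒜 0)) (j : Fin k),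
      (∑ i, (v i : R) * A i j) ∈ trunc 𝒜 m := by
    intro v j e he
    rw [decompose_sum']
    refine Finset.sum_eq_zero ?_
    intro i _
    exact decompose_mul_vanish 𝒜 (c := 0) (d := -m)
      (fun d hd => (v i).2 d (by omega)) (hA i j) e (by omega)
  have hker : LinearMap.range (muMap 𝒜 k A n hAn) = LinearMap.ker f := by
    ext x
    simp only [LinearMap.mem_range, LinearMap.mem_ker]
    constructor
    · rintro ⟨v, rfl⟩
      have hw : ∀ j : Fin k, wpart 𝒜 n m ((muMap 𝒜 k A n hAn v j : R)) = 0 := by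
        intro j
        exact wpart_eq_zero_of_mem_trunc 𝒜 n m _ (hcol v j)
      refine Prod.ext ?_ ?_
      · show Submodule.Quotient.mk _ = 0
        rw [Submodule.Quotient.mk_eq_zero]
        refine ⟨v, ?_⟩
        funext j
        apply Subtype.ext
        show (∑ i, (v i : R) * A i j)
          = (muMap 𝒜 k A n hAn v j : R) - wpart 𝒜 n m ((muMap 𝒜 k A n hAn v j : R))
        rw [hw j]
        show _ = (∑ i, (v i : R) * A i j) - 0
        rw [sub_zero]
      · funext j
        apply Subtype.ext
        show wpart 𝒜 n m ((muMap 𝒜 k A n hAn v j : R)) = 0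
        exact hw j
    · intro hx
      have h1 : (f x).1 = 0 := by rw [hx]; rfl
      have h2 : (f x).2 = 0 := by rw [hx]; rfl
      have hw : ∀ j : Fin k, wpart 𝒜 n m ((x j : R)) = 0 := by
        intro j
        have := congrFun h2 j
        exact congrArg Subtype.val this
      have h1' : (fun j => (⟨(x j : R) - wpart 𝒜 n m (x j),
          sub_wpart_mem_trunc 𝒜 n m _ ((x j).2)⟩ : ↥(trunc 𝒜 m)))
          ∈ LinearMap.range (muMap 𝒜 k A m hA) := by
        rw [← Submodule.Quotient.mk_eq_zero]
        exact h1
      obtain ⟨v, hv⟩ := h1'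
      refine ⟨v, ?_⟩
      funext j
      apply Subtype.ext
      have := congrArg Subtype.val (congrFun hv j)
      show (∑ i, (v i : R) * A i j) = (x j : R)
      rw [show (∑ i, (v i : R) * A i j) = ((x j : R) - wpart 𝒜 n m (x j)) from this, hw j,
        sub_zero]
  have hsurj : Function.Surjective f := by
    rintro ⟨q, b⟩
    obtain ⟨t, rfl⟩ := Submodule.Quotient.mk_surjective _ q
    refine ⟨fun j => ⟨(t j : R) + (b j : R), ?_⟩, ?_⟩
    · intro i hi
      rw [DirectSum.decompose_add, DirectSum.add_apply, AddSubgroup.coe_add,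
        (t j).2 i (by omega), (b j).2 i (Or.inl hi), add_zero]
    · have hwx : ∀ j : Fin k, wpart 𝒜 n m ((t j : R) + (b j : R)) = (b j : R) := by
        intro j
        rw [wpart_add, wpart_eq_zero_of_mem_trunc 𝒜 n m _ (t j).2,
          wpart_eq_self_of_mem_window 𝒜 n m _ (b j).2, zero_add]
      refine Prod.ext ?_ ?_
      · show Submodule.Quotient.mk _ = Submodule.Quotient.mk t
        congr 1
        funext j
        apply Subtype.ext
        show ((t j : R) + (b j : R)) - wpart 𝒜 n m ((t j : R) + (b j : R)) = (t j : R)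
        rw [hwx j]
        abel
      · funext j
        apply Subtype.ext
        show wpart 𝒜 n m ((t j : R) + (b j : R)) = (b j : R)
        exact hwx j
  exact ⟨(Submodule.quotEquivOfEq _ _ hker).trans (f.quotKerEquivOfSurjective hsurj)⟩
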